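/- Let μ be a probability measure on the unit circle with infinite support, (Φ_n) its monic orthogonal polynomials, φ_n = Φ_n/‖Φ_n‖_μ its orthonormal polynomials, and α_n = -conj(Φ_{n+1}(0)) its Verblunsky coefficients, with the convention α_{-1} = -1. Fix 0 < γ < 1 and ζ = e^{iω} on the unit circle, and let ν = (1-γ)μ + γδ_ω. Then α_n(dν) = α_n − q_n^{-1} γ conj(φ_{n+1}(ζ)) · Σ_{j=0}^{n} α_{j-1} (‖Φ_{n+1}‖_μ/‖Φ_j‖_μ) φ_j(ζ), where K_n(ζ) = Σ_{j=0}^{n} |φ_j(ζ)|² and q_n = (1-γ) + γK_n(ζ). -/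

import Mathlib

open MeasureTheory Polynomial Finset

noncomputable section

/-- The `L²(μ)` inner product `⟨f,g⟩_μ = ∫ conj (f z) * g z dμ(z)`. -/
def mInner (μ : Measure ℂ) (f g : ℂ → ℂ) : ℂ :=
  ∫ z, (starRingEnd ℂ) (f z) * g z ∂μ

/-- The `L²(μ)` norm `‖f‖_μ = (∫ |f z|² dμ(z))^{1/2}`. -/
def mNorm (μ : Measure ℂ) (f : ℂ → ℂ) : ℝ :=
  Real.sqrt (∫ z, ‖f z‖ ^ 2 ∂μ)

/-- `Φ` is the family of monic orthogonal polynomials for `μ`: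
`Φ n` is monic of degree `n`, and distinct `Φ`'s are orthogonal in `L²(μ)`. -/
def IsMonicOPS (μ : Measure ℂ) (Φ : ℕ → Polynomial ℂ) : Prop :=
  (∀ n, (Φ n).Monic ∧ (Φ n).natDegree = n) ∧
    ∀ m n, m ≠ n →
      mInner μ (fun z => (Φ m).eval z) (fun z => (Φ n).eval z) = 0

/-- `μ` is a measure on the unit circle `∂𝔻 = {z : ℂ | |z| = 1}`. -/
def OnCircle (μ : Measure ℂ) : Prop := μ {z : ℂ | ‖z‖ = 1}ᶜ = 0

/-- The (closed) support of `μ` is an infinite set: every closed set of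
full measure is infinite. -/
def InfiniteSupport (μ : Measure ℂ) : Prop :=
  ∀ t : Set ℂ, IsClosed t → μ tᶜ = 0 → t.Infinite

lemma conj_mul_self' (w : ℂ) : (starRingEnd ℂ) w * w = ((‖w‖ ^ 2 : ℝ) : ℂ) := by
  rw [mul_comm, Complex.mul_conj, Complex.normSq_eq_norm_sq,
    Complex.ofReal_pow]

lemma integrable_onCircle {E : Type*} [NormedAddCommGroup E] (ρ : Measure ℂ)
    [IsFiniteMeasure ρ] (hc : OnCircle ρ) (f : ℂ → E) (hf : Continuous f) :
    Integrable f ρ := by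
  obtain ⟨C, hC⟩ := (isCompact_sphere (0:ℂ) 1).exists_bound_of_continuousOn hf.continuousOn
  have hae : ∀ᵐ z ∂ρ, ‖z‖ = 1 := by
    rw [ae_iff]
    have hc' : ρ {z : ℂ | ‖z‖ = 1}ᶜ = 0 := hc
    simpa [Set.compl_setOf] using hc'
  refine Integrable.mono' (integrable_const C) hf.aestronglyMeasurable ?_
  filter_upwards [hae] with z hz
  exact hC z (by simpa [Metric.mem_sphere, dist_eq_norm] using hz)

lemma integrable_conj_mul (ρ : Measure ℂ) [IsFiniteMeasure ρ] (hc : OnCircle ρ)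
    (Q R : Polynomial ℂ) :
    Integrable (fun z => (starRingEnd ℂ) (Q.eval z) * R.eval z) ρ :=
  integrable_onCircle ρ hc _ ((Complex.continuous_conj.comp Q.continuous).mul R.continuous)

lemma poly_zero_of_integral_zero (ρ : Measure ℂ) [IsFiniteMeasure ρ] (hc : OnCircle ρ)
    (hs : InfiniteSupport ρ) (P : Polynomial ℂ)
    (h : ∫ z, ‖P.eval z‖ ^ 2 ∂ρ = 0) : P = 0 := by
  have hint : Integrable (fun z => ‖P.eval z‖ ^ 2) ρ :=
    integrable_onCircle ρ hc _ (P.continuous.norm.pow 2)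
  have hae := (integral_eq_zero_iff_of_nonneg (fun z => by positivity) hint).mp h
  have hnull : ρ {z : ℂ | P.eval z = 0}ᶜ = 0 := by
    have := hae
    rw [Filter.EventuallyEq, ae_iff] at this
    refine measure_mono_null ?_ this
    intro z hz
    simp only [Set.mem_compl_iff, Set.mem_setOf_eq] at hz ⊢
    simpa using hz
  have hcl : IsClosed {z : ℂ | P.eval z = 0} := isClosed_eq P.continuous continuous_const
  exact P.eq_zero_of_infinite_isRoot (hs _ hcl hnull)

lemma mInner_self_eq (ρ : Measure ℂ) (P : Polynomial ℂ) :
    mInner ρ (fun z => P.eval z) (fun z => P.eval z)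
      = (((mNorm ρ fun z => P.eval z) ^ 2 : ℝ) : ℂ) := by
  have h1 : (mNorm ρ fun z => P.eval z) ^ 2 = ∫ z, ‖P.eval z‖ ^ 2 ∂ρ :=
    Real.sq_sqrt (integral_nonneg fun z => by positivity)
  rw [mInner, h1]
  calc ∫ z, (starRingEnd ℂ) (P.eval z) * P.eval z ∂ρ
      = ∫ z, ((‖P.eval z‖ ^ 2 : ℝ) : ℂ) ∂ρ :=
        integral_congr_ae (Filter.Eventually.of_forall fun z => conj_mul_self' _)
    _ = _ := integral_ofReal

lemma poly_zero_of_mInner_self (ρ : Measure ℂ) [IsFiniteMeasure ρ] (hc : OnCircle ρ)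
    (hs : InfiniteSupport ρ) (P : Polynomial ℂ)
    (h : mInner ρ (fun z => P.eval z) (fun z => P.eval z) = 0) : P = 0 := by
  rw [mInner_self_eq] at h
  have h2 : (mNorm ρ fun z => P.eval z) ^ 2 = 0 := by exact_mod_cast h
  have h3 : ∫ z, ‖P.eval z‖ ^ 2 ∂ρ = 0 := by
    rw [← Real.sq_sqrt (integral_nonneg fun z => by positivity : (0:ℝ) ≤ _)]
    exact h2
  exact poly_zero_of_integral_zero ρ hc hs P h3

lemma mNorm_pos (ρ : Measure ℂ) [IsFiniteMeasure ρ] (hc : OnCircle ρ)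
    (hs : InfiniteSupport ρ) (P : Polynomial ℂ) (hP : P ≠ 0) :
    0 < mNorm ρ (fun z => P.eval z) := by
  rw [mNorm, Real.sqrt_pos]
  have hnn : (0:ℝ) ≤ ∫ z, ‖P.eval z‖ ^ 2 ∂ρ := integral_nonneg fun z => by positivity
  rcases lt_or_eq_of_le hnn with h | h
  · exact h
  · exact absurd (poly_zero_of_integral_zero ρ hc hs P h.symm) hP

lemma mInner_left_sum (ρ : Measure ℂ) (s : Finset ℕ) (c : ℕ → ℂ)
    (F : ℕ → Polynomial ℂ) (R : Polynomial ℂ)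
    (hint : ∀ j ∈ s, Integrable (fun z => (starRingEnd ℂ) ((F j).eval z) * R.eval z) ρ) :
    mInner ρ (fun z => (∑ j ∈ s, c j • F j).eval z) (fun z => R.eval z)
      = ∑ j ∈ s, (starRingEnd ℂ) (c j) *
          mInner ρ (fun z => (F j).eval z) (fun z => R.eval z) := by
  rw [mInner]
  have h1 : (fun z => (starRingEnd ℂ) ((∑ j ∈ s, c j • F j).eval z) * R.eval z)
      = fun z => ∑ j ∈ s, (starRingEnd ℂ) (c j) *
          ((starRingEnd ℂ) ((F j).eval z) * R.eval z) := by
    funext z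
    rw [eval_finset_sum, map_sum, Finset.sum_mul]
    exact Finset.sum_congr rfl fun j _ => by
      simp only [eval_smul, smul_eq_mul, map_mul]; ring
  rw [h1, integral_finset_sum s (fun j hj =>
    ((hint j hj).const_mul _))]
  exact Finset.sum_congr rfl fun j hj => integral_const_mul _ _

lemma mInner_right_sub_sum (ρ : Measure ℂ) (s : Finset ℕ) (e : ℕ → ℂ)
    (F : ℕ → Polynomial ℂ) (Q R : Polynomial ℂ)
    (hintR : Integrable (fun z => (starRingEnd ℂ) (Q.eval z) * R.eval z) ρ)
    (hint : ∀ j ∈ s, Integrable (fun z => (starRingEnd ℂ) (Q.eval z) * (F j).eval z) ρ) :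
    mInner ρ (fun z => Q.eval z) (fun z => (R - ∑ j ∈ s, e j • F j).eval z)
      = mInner ρ (fun z => Q.eval z) (fun z => R.eval z)
        - ∑ j ∈ s, e j * mInner ρ (fun z => Q.eval z) (fun z => (F j).eval z) := by
  rw [mInner]
  have h1 : (fun z => (starRingEnd ℂ) (Q.eval z) * (R - ∑ j ∈ s, e j • F j).eval z)
      = fun z => (starRingEnd ℂ) (Q.eval z) * R.eval z
          - ∑ j ∈ s, e j * ((starRingEnd ℂ) (Q.eval z) * (F j).eval z) := by
    funext z
    rw [eval_sub, eval_finset_sum, mul_sub]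
    congr 1
    rw [Finset.mul_sum]
    exact Finset.sum_congr rfl fun j _ => by
      simp only [eval_smul, smul_eq_mul]; ring
  rw [h1, integral_sub hintR (integrable_finset_sum s fun j hj => (hint j hj).const_mul _),
    integral_finset_sum s (fun j hj => (hint j hj).const_mul _)]
  rw [mInner]
  congr 1
  exact Finset.sum_congr rfl fun j hj => integral_const_mul _ _

lemma mInner_right_sub (ρ : Measure ℂ) (Q R S : Polynomial ℂ)
    (h1 : Integrable (fun z => (starRingEnd ℂ) (Q.eval z) * R.eval z) ρ)
    (h2 : Integrable (fun z => (starRingEnd ℂ) (Q.eval z) * S.eval z) ρ) :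
    mInner ρ (fun z => Q.eval z) (fun z => (R - S).eval z)
      = mInner ρ (fun z => Q.eval z) (fun z => R.eval z)
        - mInner ρ (fun z => Q.eval z) (fun z => S.eval z) := by
  rw [mInner]
  have : (fun z => (starRingEnd ℂ) (Q.eval z) * (R - S).eval z)
      = fun z => (starRingEnd ℂ) (Q.eval z) * R.eval z
          - (starRingEnd ℂ) (Q.eval z) * S.eval z := by
    funext z; rw [eval_sub]; ring
  rw [this, integral_sub h1 h2]; rfl

lemma onCircle_dirac (ζ : ℂ) (hζ : ‖ζ‖ = 1) : OnCircle (Measure.dirac ζ) := by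
  have hmeas : MeasurableSet {z : ℂ | ‖z‖ = 1} :=
    (isClosed_eq continuous_norm continuous_const).measurableSet
  rw [OnCircle, Measure.dirac_apply' _ hmeas.compl, Set.indicator_of_notMem]
  simp [hζ]

lemma span_monic (F : ℕ → Polynomial ℂ) (hF : ∀ k, (F k).Monic ∧ (F k).natDegree = k) :
    ∀ n (Q : Polynomial ℂ), (∀ m : ℕ, n < m → Q.coeff m = 0) →
      ∃ c : ℕ → ℂ, Q = ∑ j ∈ Finset.range (n + 1), c j • F j := by
  intro n
  induction n with
  | zero =>
    intro Q hQ
    have hF0 : F 0 = 1 := by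
      have h := hF 0
      have hc1 : (F 0).coeff 0 = 1 := by
        have hm := h.1
        rwa [Polynomial.Monic, Polynomial.leadingCoeff, h.2] at hm
      rw [Polynomial.eq_C_of_natDegree_eq_zero h.2, hc1, map_one]
    refine ⟨fun _ => Q.coeff 0, ?_⟩
    rw [Finset.sum_range_one, hF0, smul_eq_C_mul, mul_one]
    ext m
    rcases Nat.eq_zero_or_pos m with hm | hm
    · simp [hm]
    · rw [hQ m hm, Polynomial.coeff_C, if_neg (by omega)]
  | succ n ih =>
    intro Q hQ
    set Q' := Q - Q.coeff (n+1) • F (n+1) with hQ'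
    have hco : ∀ m : ℕ, n < m → Q'.coeff m = 0 := by
      intro m hm
      rw [hQ', Polynomial.coeff_sub, Polynomial.coeff_smul, smul_eq_mul]
      rcases eq_or_lt_of_le (Nat.succ_le_of_lt hm) with hm' | hm'
      · rw [← hm']
        have : (F (n+1)).coeff (n+1) = 1 := by
          have h := hF (n+1)
          have := h.1
          rwa [Polynomial.Monic, Polynomial.leadingCoeff, h.2] at this
        rw [this, mul_one, sub_self]
      · have hdeg : (F (n+1)).natDegree < m := by rw [(hF (n+1)).2]; omega
        rw [hQ m hm', Polynomial.coeff_eq_zero_of_natDegree_lt hdeg, mul_zero, sub_zero]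
    obtain ⟨c, hc⟩ := ih Q' hco
    refine ⟨fun j => if j = n + 1 then Q.coeff (n+1) else c j, ?_⟩
    rw [Finset.sum_range_succ]
    beta_reduce
    rw [if_pos rfl]
    have : ∑ j ∈ Finset.range (n+1), (if j = n + 1 then Q.coeff (n+1) else c j) • F j
        = ∑ j ∈ Finset.range (n+1), c j • F j := by
      refine Finset.sum_congr rfl fun j hj => ?_
      rw [if_neg (by simp at hj; omega)]
    rw [this, ← hc, hQ']
    exact (sub_add_cancel _ _).symm

lemma mInner_nu (μ : Measure ℂ) [IsFiniteMeasure μ] (hcμ : OnCircle μ) (γ : ℝ)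
    (hγ0 : 0 ≤ γ) (hγ1 : γ ≤ 1) (ζ : ℂ) (hζ : ‖ζ‖ = 1) (Q R : Polynomial ℂ) :
    mInner (ENNReal.ofReal (1 - γ) • μ + ENNReal.ofReal γ • Measure.dirac ζ)
        (fun z => Q.eval z) (fun z => R.eval z)
      = ((1 - γ : ℝ) : ℂ) * mInner μ (fun z => Q.eval z) (fun z => R.eval z)
        + (γ : ℂ) * ((starRingEnd ℂ) (Q.eval ζ) * R.eval ζ) := by
  have h1 : Integrable (fun z => (starRingEnd ℂ) (Q.eval z) * R.eval z)
      (ENNReal.ofReal (1 - γ) • μ) :=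
    (integrable_conj_mul μ hcμ Q R).smul_measure ENNReal.ofReal_ne_top
  have h2 : Integrable (fun z => (starRingEnd ℂ) (Q.eval z) * R.eval z)
      (ENNReal.ofReal γ • Measure.dirac ζ) :=
    (integrable_conj_mul _ (onCircle_dirac ζ hζ) Q R).smul_measure ENNReal.ofReal_ne_top
  rw [mInner, integral_add_measure h1 h2, integral_smul_measure, integral_smul_measure,
    integral_dirac, ENNReal.toReal_ofReal (by linarith), ENNReal.toReal_ofReal hγ0,
    Complex.real_smul, Complex.real_smul]
  rfl

/-- **Simon's formula (Theorem 10.13.7 ingredient).** With the convention `α_{-1} = -1`,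
`α_n(dν) = α_n - q_n⁻¹ γ conj(φ_{n+1}(ζ)) Σ_{j=0}^n α_{j-1} (‖Φ_{n+1}‖/‖Φ_j‖) φ_j(ζ)`. -/
theorem verblunsky_insert_point_mass_simon
    (μ : Measure ℂ) [IsProbabilityMeasure μ] (hcirc : OnCircle μ)
    (hsupp : InfiniteSupport μ)
    (Φ : ℕ → Polynomial ℂ) (hΦ : IsMonicOPS μ Φ)
    (φ : ℕ → ℂ → ℂ)
    (hφ : ∀ n z, φ n z = (Φ n).eval z / (mNorm μ (fun w => (Φ n).eval w) : ℂ))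
    (α : ℕ → ℂ) (hα : ∀ n, α n = -(starRingEnd ℂ) ((Φ (n + 1)).eval 0))
    -- `αm j` is `α_{j-1}`, with the convention `α_{-1} = -1`
    (αm : ℕ → ℂ) (hαm0 : αm 0 = -1) (hαm : ∀ j, αm (j + 1) = α j)
    (γ : ℝ) (hγ0 : 0 < γ) (hγ1 : γ < 1)
    (ω : ℝ) (ζ : ℂ) (hζ : ζ = Complex.exp (ω * Complex.I))
    (ν : Measure ℂ)
    (hν : ν = ENNReal.ofReal (1 - γ) • μ + ENNReal.ofReal γ • Measure.dirac ζ)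
    (Ψ : ℕ → Polynomial ℂ) (hΨ : IsMonicOPS ν Ψ)
    (αν : ℕ → ℂ) (hαν : ∀ n, αν n = -(starRingEnd ℂ) ((Ψ (n + 1)).eval 0))
    (K : ℕ → ℝ) (hK : ∀ n, K n = ∑ j ∈ Finset.range (n + 1), ‖φ j ζ‖ ^ 2)
    (q : ℕ → ℝ) (hq : ∀ n, q n = (1 - γ) + γ * K n)
    (n : ℕ) :
    αν n = α n - ((q n : ℝ) : ℂ)⁻¹ * (γ : ℂ) * (starRingEnd ℂ) (φ (n + 1) ζ) *
        ∑ j ∈ Finset.range (n + 1), αm j *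
          ((mNorm μ (fun w => (Φ (n + 1)).eval w) / mNorm μ (fun w => (Φ j).eval w) : ℝ) : ℂ) *
          φ j ζ := by
  obtain ⟨hΦmon, hΦorth⟩ := hΦ
  obtain ⟨hΨmon, hΨorth⟩ := hΨ
  have hζ1 : ‖ζ‖ = 1 := by
    rw [hζ, Complex.norm_exp_ofReal_mul_I]
  haveI hνfin : IsFiniteMeasure ν := by
    rw [hν]
    constructor
    rw [Measure.add_apply, Measure.smul_apply, Measure.smul_apply, smul_eq_mul, smul_eq_mul]
    exact ENNReal.add_lt_top.mpr
      ⟨ENNReal.mul_lt_top ENNReal.ofReal_lt_top (measure_lt_top μ _),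
       ENNReal.mul_lt_top ENNReal.ofReal_lt_top (measure_lt_top _ _)⟩
  have hcirc' : μ {z : ℂ | ‖z‖ = 1}ᶜ = 0 := hcirc
  have hνcirc : OnCircle ν := by
    show ν {z : ℂ | ‖z‖ = 1}ᶜ = 0
    rw [hν, Measure.add_apply, Measure.smul_apply, Measure.smul_apply,
      hcirc', onCircle_dirac ζ hζ1, smul_zero, smul_zero, add_zero]
  have hνsupp : InfiniteSupport ν := by
    intro t ht h0
    refine hsupp t ht ?_
    rw [hν, Measure.add_apply] at h0
    obtain ⟨ha, -⟩ := add_eq_zero.mp h0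
    rw [Measure.smul_apply, smul_eq_mul] at ha
    rcases mul_eq_zero.mp ha with h | h
    · exact absurd h (by simp [ENNReal.ofReal_eq_zero]; linarith)
    · exact h
  have hNpos : ∀ j, 0 < mNorm μ (fun w => (Φ j).eval w) :=
    fun j => mNorm_pos μ hcirc hsupp _ (hΦmon j).1.ne_zero
  have hNne : ∀ j, ((mNorm μ (fun w => (Φ j).eval w) : ℝ) : ℂ) ≠ 0 :=
    fun j => by exact_mod_cast (hNpos j).ne'
  have hevalζ : ∀ j, (Φ j).eval ζ
      = ((mNorm μ (fun w => (Φ j).eval w) : ℝ) : ℂ) * φ j ζ := by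
    intro j
    rw [hφ j ζ]
    field_simp [hNne j]
  have hKnn : 0 ≤ K n := by rw [hK]; positivity
  have hqpos : 0 < q n := by
    have := mul_nonneg hγ0.le hKnn
    rw [hq]; linarith
  have hqne : ((q n : ℝ) : ℂ) ≠ 0 := by exact_mod_cast hqpos.ne'
  set c : ℂ := (γ : ℂ) * (Φ (n+1)).eval ζ * (((q n : ℝ) : ℂ))⁻¹ with hcdef
  set e : ℕ → ℂ := fun j => c * (starRingEnd ℂ) (φ j ζ) *
    (((mNorm μ (fun w => (Φ j).eval w) : ℝ) : ℂ))⁻¹ with hedef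
  have he : ∀ j, e j = c * (starRingEnd ℂ) (φ j ζ) *
      (((mNorm μ (fun w => (Φ j).eval w) : ℝ) : ℂ))⁻¹ := fun j => rfl
  set S : Polynomial ℂ := ∑ j ∈ Finset.range (n+1), e j • Φ j with hSdef
  set P : Polynomial ℂ := Φ (n+1) - S with hPdef
  have hdegS : S.degree < ((n+1 : ℕ) : WithBot ℕ) := by
    rw [hSdef]
    refine lt_of_le_of_lt (Polynomial.degree_sum_le _ _) ?_
    rw [Finset.sup_lt_iff (by exact_mod_cast WithBot.bot_lt_coe (n+1))]
    intro j hj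
    refine lt_of_le_of_lt (Polynomial.degree_smul_le _ _) ?_
    refine lt_of_le_of_lt Polynomial.degree_le_natDegree ?_
    rw [(hΦmon j).2]
    exact_mod_cast Finset.mem_range.mp hj
  have hΦdeg1 : (Φ (n+1)).degree = ((n+1:ℕ) : WithBot ℕ) := by
    rw [Polynomial.degree_eq_natDegree (hΦmon (n+1)).1.ne_zero, (hΦmon (n+1)).2]
  have hPmon : P.Monic := by
    rw [hPdef, sub_eq_add_neg]
    refine (hΦmon (n+1)).1.add_of_left ?_
    rw [Polynomial.degree_neg, hΦdeg1]
    exact hdegS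
  have hPdeg : P.degree = ((n+1:ℕ):WithBot ℕ) := by
    rw [hPdef, Polynomial.degree_sub_eq_left_of_degree_lt (by rw [hΦdeg1]; exact hdegS)]
    exact hΦdeg1
  have hintμ : ∀ A B : Polynomial ℂ,
      Integrable (fun z => (starRingEnd ℂ) (A.eval z) * B.eval z) μ :=
    fun A B => integrable_conj_mul μ hcirc A B
  have hintν : ∀ A B : Polynomial ℂ,
      Integrable (fun z => (starRingEnd ℂ) (A.eval z) * B.eval z) ν :=
    fun A B => integrable_conj_mul ν hνcirc A B
  have hself : ∀ k, mInner μ (fun z => (Φ k).eval z) (fun z => (Φ k).eval z)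
      = ((mNorm μ (fun w => (Φ k).eval w) : ℝ) : ℂ) ^ 2 := by
    intro k
    rw [mInner_self_eq]
    push_cast
    ring
  have hO1 : ∀ k ∈ Finset.range (n+1),
      mInner μ (fun z => (Φ k).eval z) (fun z => P.eval z)
        = -(e k * ((mNorm μ (fun w => (Φ k).eval w) : ℝ) : ℂ) ^ 2) := by
    intro k hk
    rw [hPdef, hSdef, mInner_right_sub_sum μ _ _ _ _ _ (hintμ _ _) (fun j _ => hintμ _ _)]
    rw [hΦorth k (n+1) (by simp at hk; omega)]
    rw [Finset.sum_eq_single_of_mem k hk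
      (fun j _ hne => by rw [hΦorth k j (Ne.symm hne), mul_zero])]
    rw [hself k]
    ring
  have hKc : ((K n : ℝ) : ℂ) = ∑ j ∈ Finset.range (n+1), (starRingEnd ℂ) (φ j ζ) * φ j ζ := by
    rw [hK]
    push_cast
    refine Finset.sum_congr rfl fun j _ => ?_
    rw [conj_mul_self']
    push_cast
    ring
  have hPζ : P.eval ζ = (Φ (n+1)).eval ζ - c * ((K n : ℝ) : ℂ) := by
    rw [hPdef, Polynomial.eval_sub, hSdef, Polynomial.eval_finset_sum]
    congr 1
    rw [hKc, Finset.mul_sum]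
    refine Finset.sum_congr rfl fun j _ => ?_
    rw [Polynomial.eval_smul, smul_eq_mul, he j, hevalζ j]
    field_simp [hNne j]
  have hrel : c * (((1 - γ : ℝ) : ℂ) + (γ : ℂ) * ((K n : ℝ) : ℂ))
      = (γ : ℂ) * (Φ (n+1)).eval ζ := by
    have hq2 : ((q n : ℝ) : ℂ) = ((1-γ:ℝ):ℂ) + (γ:ℂ) * ((K n:ℝ):ℂ) := by
      rw [hq]; push_cast; ring
    rw [← hq2, hcdef]
    field_simp [hqne]
  have hO3 : ∀ k ∈ Finset.range (n+1),
      mInner ν (fun z => (Φ k).eval z) (fun z => P.eval z) = 0 := by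
    intro k hk
    have hek : e k * ((mNorm μ (fun w => (Φ k).eval w) : ℝ) : ℂ) ^ 2
        = c * (starRingEnd ℂ) (φ k ζ) * ((mNorm μ (fun w => (Φ k).eval w) : ℝ) : ℂ) := by
      rw [he k]
      field_simp [hNne k]
    rw [hν, mInner_nu μ hcirc γ hγ0.le hγ1.le ζ hζ1, hO1 k hk, hek, hPζ, hevalζ k,
      map_mul, Complex.conj_ofReal]
    linear_combination (-(((mNorm μ (fun w => (Φ k).eval w) : ℝ) : ℂ) *
      (starRingEnd ℂ) (φ k ζ))) * hrel
  have key : P = Ψ (n+1) := by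
    have hΨdeg : (Ψ (n+1)).degree = ((n+1:ℕ):WithBot ℕ) := by
      rw [Polynomial.degree_eq_natDegree (hΨmon (n+1)).1.ne_zero, (hΨmon (n+1)).2]
    have hDdeg : (P - Ψ (n+1)).degree < ((n+1:ℕ):WithBot ℕ) := by
      have h := Polynomial.degree_sub_lt (hPdeg.trans hΨdeg.symm) hPmon.ne_zero
        (by rw [hPmon.leadingCoeff, (hΨmon (n+1)).1.leadingCoeff])
      rwa [hPdeg] at h
    have hDco : ∀ m : ℕ, n < m → (P - Ψ (n+1)).coeff m = 0 := by
      intro m hm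
      apply Polynomial.coeff_eq_zero_of_degree_lt
      refine lt_of_lt_of_le hDdeg ?_
      exact_mod_cast Nat.succ_le_of_lt hm
    obtain ⟨cf, hcf⟩ := span_monic Φ hΦmon n _ hDco
    obtain ⟨cg, hcg⟩ := span_monic Ψ hΨmon n _ hDco
    have hDP : mInner ν (fun z => (P - Ψ (n+1)).eval z) (fun z => P.eval z) = 0 := by
      rw [hcf, mInner_left_sum ν _ _ _ _ (fun j _ => hintν _ _)]
      exact Finset.sum_eq_zero fun j hj => by rw [hO3 j hj, mul_zero]
    have hDΨ : mInner ν (fun z => (P - Ψ (n+1)).eval z)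
        (fun z => (Ψ (n+1)).eval z) = 0 := by
      rw [hcg, mInner_left_sum ν _ _ _ _ (fun j _ => hintν _ _)]
      exact Finset.sum_eq_zero fun j hj => by
        rw [hΨorth j (n+1) (by simp at hj; omega), mul_zero]
    have hDD : mInner ν (fun z => (P - Ψ (n+1)).eval z)
        (fun z => (P - Ψ (n+1)).eval z) = 0 := by
      rw [mInner_right_sub ν _ _ _ (hintν _ _) (hintν _ _), hDP, hDΨ, sub_zero]
    exact sub_eq_zero.mp (poly_zero_of_mInner_self ν hνcirc hνsupp _ hDD)
  have hΦ0 : ∀ j, (Φ j).eval 0 = -(starRingEnd ℂ) (αm j) := by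
    intro j
    cases j with
    | zero =>
      have h := hΦmon 0
      have hc1 : (Φ 0).coeff 0 = 1 := by
        have hm2 := h.1
        rwa [Polynomial.Monic, Polynomial.leadingCoeff, h.2] at hm2
      rw [Polynomial.eq_C_of_natDegree_eq_zero h.2, hc1, map_one, hαm0]
      simp
    | succ j =>
      rw [hαm j, hα j]
      simp
  have hstep : ∀ j ∈ Finset.range (n+1), (starRingEnd ℂ) ((e j • Φ j).eval 0)
      = -(((q n : ℝ) : ℂ)⁻¹ * (γ : ℂ) * (starRingEnd ℂ) (φ (n + 1) ζ) *
          (αm j * ((mNorm μ (fun w => (Φ (n + 1)).eval w)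
            / mNorm μ (fun w => (Φ j).eval w) : ℝ) : ℂ) * φ j ζ)) := by
    intro j _
    rw [Polynomial.eval_smul, smul_eq_mul, map_mul, hΦ0 j, he j, hcdef, hevalζ (n+1)]
    simp only [map_mul, map_neg, map_inv₀, Complex.conj_conj, Complex.conj_ofReal]
    rw [Complex.ofReal_div]
    field_simp [hNne j, hqne]
  rw [hαν n, ← key, hPdef, Polynomial.eval_sub, hSdef, Polynomial.eval_finset_sum,
    map_sub, map_sum, Finset.sum_congr rfl hstep, Finset.sum_neg_distrib,
    ← Finset.mul_sum, hα n]
  ring
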